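/- If x is a constructible real number, then the degree of the field extension ℚ(x)/ℚ is a power of 2. -/

import Mathlib

/-- A real number is constructible by ruler and compass: it can be obtained from
the rationals by field operations and taking square roots of nonnegative numbers. -/
inductive IsConstructibleR : ℝ → Prop
  | rat (q : ℚ) : IsConstructibleR (q : ℝ)
  | add {x y : ℝ} : IsConstructibleR x → IsConstructibleR y → IsConstructibleR (x + y)
  | neg {x : ℝ} : IsConstructibleR x → IsConstructibleR (-x)
  | mul {x y : ℝ} : IsConstructibleR x → IsConstructibleR y → IsConstructibleR (x * y)
  | inv {x : ℝ} : IsConstructibleR x → IsConstructibleR x⁻¹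
  | sqrt {x : ℝ} : 0 ≤ x → IsConstructibleR x → IsConstructibleR (Real.sqrt x)

open IntermediateField Polynomial Module

/-- Towers of quadratic (square-root) extensions of ℚ inside ℝ. -/
inductive QT : IntermediateField ℚ ℝ → Prop
  | bot : QT ⊥
  | step (K : IntermediateField ℚ ℝ) (a : ℝ) (h : a ^ 2 ∈ K) (hK : QT K) :
      QT (IntermediateField.restrictScalars ℚ (IntermediateField.adjoin K {a}))

lemma qt_le_step (K : IntermediateField ℚ ℝ) (a : ℝ) :
    K ≤ IntermediateField.restrictScalars ℚ (IntermediateField.adjoin K {a}) := by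
  erw [restrictScalars_adjoin_eq_sup]; exact le_sup_left

lemma isIntegral_of_sq_mem (K : IntermediateField ℚ ℝ) (a : ℝ) (h : a ^ 2 ∈ K) :
    IsIntegral K a := by
  refine ⟨X ^ 2 - C ⟨a ^ 2, h⟩, monic_X_pow_sub_C _ (by norm_num), ?_⟩
  simp [sub_eq_zero]

lemma qt_finrank {K : IntermediateField ℚ ℝ} (hK : QT K) :
    ∃ k : ℕ, finrank ℚ K = 2 ^ k := by
  induction hK with
  | bot => exact ⟨0, by simp [IntermediateField.finrank_bot]⟩
  | step K a h hK ih =>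
    obtain ⟨k, hk⟩ := ih
    have hle := qt_le_step K a
    have hmul := finrank_bot_mul_relfinrank hle
    have hext : extendScalars hle = IntermediateField.adjoin K {a} :=
      restrictScalars_injective ℚ (extendScalars_restrictScalars hle)
    rw [relfinrank_eq_finrank_of_le hle, hext] at hmul
    have hint := isIntegral_of_sq_mem K a h
    have hdeg : finrank K (IntermediateField.adjoin K {a}) = (minpoly K a).natDegree := by
      rw [← IntermediateField.adjoin.finrank hint]
    have hdvd : minpoly K a ∣ X ^ 2 - C ⟨a ^ 2, h⟩ := by
      apply minpoly.dvd
      simp [sub_eq_zero]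
    have hne : (X ^ 2 - C (⟨a ^ 2, h⟩ : K)) ≠ 0 :=
      (monic_X_pow_sub_C _ (by norm_num)).ne_zero
    have h2 : (minpoly K a).natDegree ≤ 2 := by
      have := Polynomial.natDegree_le_of_dvd hdvd hne
      simpa [Polynomial.natDegree_X_pow_sub_C] using this
    have h1 : 0 < (minpoly K a).natDegree := minpoly.natDegree_pos hint
    interval_cases hdeg' : (minpoly K a).natDegree
    · exact ⟨k, by rw [← hmul, hdeg, hk, mul_one]⟩
    · exact ⟨k + 1, by rw [← hmul, hdeg, hk, pow_succ]⟩

lemma qt_directed {K L : IntermediateField ℚ ℝ} (hK : QT K) (hL : QT L) :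
    ∃ M, QT M ∧ K ≤ M ∧ L ≤ M := by
  induction hL with
  | bot => exact ⟨K, hK, le_rfl, bot_le⟩
  | step L a h hL ih =>
    obtain ⟨M, hM, hKM, hLM⟩ := ih
    refine ⟨IntermediateField.restrictScalars ℚ (IntermediateField.adjoin M {a}),
      QT.step M a (hLM h) hM, hKM.trans (qt_le_step M a), ?_⟩
    erw [restrictScalars_adjoin_eq_sup, restrictScalars_adjoin_eq_sup]
    exact sup_le_sup_right hLM _

lemma constructible_mem_qt {x : ℝ} (hx : IsConstructibleR x) :
    ∃ K : IntermediateField ℚ ℝ, QT K ∧ x ∈ K := by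
  induction hx with
  | rat q => exact ⟨⊥, QT.bot, SubfieldClass.ratCast_mem _ q⟩
  | add hx hy ihx ihy =>
    obtain ⟨K, hK, hxK⟩ := ihx
    obtain ⟨L, hL, hyL⟩ := ihy
    obtain ⟨M, hM, hKM, hLM⟩ := qt_directed hK hL
    exact ⟨M, hM, add_mem (hKM hxK) (hLM hyL)⟩
  | neg hx ihx =>
    obtain ⟨K, hK, hxK⟩ := ihx
    exact ⟨K, hK, neg_mem hxK⟩
  | mul hx hy ihx ihy =>
    obtain ⟨K, hK, hxK⟩ := ihx
    obtain ⟨L, hL, hyL⟩ := ihy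
    obtain ⟨M, hM, hKM, hLM⟩ := qt_directed hK hL
    exact ⟨M, hM, mul_mem (hKM hxK) (hLM hyL)⟩
  | inv hx ihx =>
    obtain ⟨K, hK, hxK⟩ := ihx
    exact ⟨K, hK, inv_mem hxK⟩
  | @sqrt y hx0 hx ihx =>
    obtain ⟨K, hK, hxK⟩ := ihx
    have h : (Real.sqrt y) ^ 2 ∈ K := by rwa [Real.sq_sqrt hx0]
    refine ⟨_, QT.step K _ h hK, ?_⟩
    rw [mem_restrictScalars]
    exact subset_adjoin K _ rfl

open IntermediateField in
theorem constructible_degree_pow_two (x : ℝ) (hx : IsConstructibleR x) :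
    ∃ k : ℕ, Module.finrank ℚ ℚ⟮x⟯ = 2 ^ k := by
  obtain ⟨K, hK, hxK⟩ := constructible_mem_qt hx
  obtain ⟨k, hk⟩ := qt_finrank hK
  have hle : ℚ⟮x⟯ ≤ K := adjoin_simple_le_iff.mpr hxK
  have hmul := finrank_bot_mul_relfinrank hle
  have hdvd : finrank ℚ ℚ⟮x⟯ ∣ 2 ^ k := by
    rw [← hk, ← hmul]; exact Dvd.intro _ rfl
  obtain ⟨j, _, hj⟩ := (Nat.dvd_prime_pow Nat.prime_two).mp hdvd
  exact ⟨j, hj⟩
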